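/- Let M and N be complex n×n matrices with A = M + N, let α > 0 and ω ∈ [0,2), and set H = αI + M, S = αI + N. Suppose M is Hermitian positive definite and N is either Hermitian positive semidefinite or skew-Hermitian (N* = −N). Then A, H and S are invertible, the GADI iteration matrix T_F(α,ω) = S⁻¹H⁻¹(α²I + MN − (1−ω)αA) has spectral radius ρ(T_F(α,ω)) < 1, and for every b and every initial vector x⁰ the GADI iterates x^{k+1} = T_F(α,ω)x^k + (2−ω)α S⁻¹H⁻¹ b converge to the unique solution x of Ax = b. -/

import Mathlib

open Matrix Filter Set Topology
open scoped ComplexOrder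
open scoped NNReal ENNReal

noncomputable def nsqV {n : ℕ} (x : Fin n → ℂ) : ℝ := ∑ i, Complex.normSq (x i)

lemma nsqV_nonneg {n : ℕ} (x : Fin n → ℂ) : 0 ≤ nsqV x :=
  Finset.sum_nonneg fun i _ => Complex.normSq_nonneg _

lemma nsqV_eq_zero_iff {n : ℕ} {x : Fin n → ℂ} : nsqV x = 0 ↔ x = 0 := by
  constructor
  · intro h
    funext j
    have := (Finset.sum_eq_zero_iff_of_nonneg (fun i _ => Complex.normSq_nonneg (x i))).mp h
      j (Finset.mem_univ j)
    simpa using Complex.normSq_eq_zero.mp this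
  · intro h; simp [h, nsqV]

lemma nsqV_pos {n : ℕ} {x : Fin n → ℂ} (hx : x ≠ 0) : 0 < nsqV x :=
  lt_of_le_of_ne (nsqV_nonneg x) (fun h => hx (nsqV_eq_zero_iff.mp h.symm))

lemma nsqV_smul {n : ℕ} (c : ℂ) (x : Fin n → ℂ) :
    nsqV (c • x) = Complex.normSq c * nsqV x := by
  simp [nsqV, Complex.normSq_mul, Finset.mul_sum]

lemma re_dot_eq {n : ℕ} (x y : Fin n → ℂ) :
    (star x ⬝ᵥ y).re = ∑ i, ((starRingEnd ℂ) (x i) * y i).re := by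
  simp [dotProduct, Complex.re_sum]

lemma re_dot_self {n : ℕ} (x : Fin n → ℂ) : (star x ⬝ᵥ x).re = nsqV x := by
  rw [re_dot_eq, nsqV]
  refine Finset.sum_congr rfl fun i _ => ?_
  rw [mul_comm, Complex.mul_conj]
  simp

lemma nsq_diff {n : ℕ} (B : Matrix (Fin n) (Fin n) ℂ) (α : ℝ) (y : Fin n → ℂ) :
    nsqV (((α : ℂ) • 1 + B) *ᵥ y) - nsqV (((α : ℂ) • 1 - B) *ᵥ y)
      = 4 * α * (star y ⬝ᵥ (B *ᵥ y)).re := by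
  have h1 : ((α : ℂ) • 1 + B) *ᵥ y = (α : ℂ) • y + B *ᵥ y := by
    simp [Matrix.add_mulVec, Matrix.smul_mulVec]
  have h2 : ((α : ℂ) • 1 - B) *ᵥ y = (α : ℂ) • y - B *ᵥ y := by
    simp [Matrix.sub_mulVec, Matrix.smul_mulVec]
  rw [h1, h2, nsqV, nsqV, ← Finset.sum_sub_distrib, re_dot_eq, Finset.mul_sum]
  refine Finset.sum_congr rfl fun i _ => ?_
  simp only [Pi.add_apply, Pi.sub_apply, Pi.smul_apply, smul_eq_mul]
  rw [Complex.normSq_add, Complex.normSq_sub]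
  have : ((α : ℂ) * y i * (starRingEnd ℂ) ((B *ᵥ y) i)).re
      = α * ((starRingEnd ℂ) (y i) * (B *ᵥ y) i).re := by
    rw [mul_assoc, Complex.re_ofReal_mul]
    congr 1
    rw [← Complex.conj_re ((starRingEnd ℂ) (y i) * (B *ᵥ y) i)]
    simp [mul_comm]
  rw [this]
  ring

lemma posDef_re {n : ℕ} {M : Matrix (Fin n) (Fin n) ℂ} (hM : M.PosDef)
    {x : Fin n → ℂ} (hx : x ≠ 0) : 0 < (star x ⬝ᵥ (M *ᵥ x)).re := by
  have := hM.dotProduct_mulVec_pos hx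
  simpa using (Complex.lt_def.mp this).1

lemma posSemidef_re {n : ℕ} {N : Matrix (Fin n) (Fin n) ℂ} (hN : N.PosSemidef)
    (x : Fin n → ℂ) : 0 ≤ (star x ⬝ᵥ (N *ᵥ x)).re := by
  have := hN.dotProduct_mulVec_nonneg x
  simpa using (Complex.le_def.mp this).1

lemma skew_re {n : ℕ} {N : Matrix (Fin n) (Fin n) ℂ} (hN : Nᴴ = -N)
    (x : Fin n → ℂ) : (star x ⬝ᵥ (N *ᵥ x)).re = 0 := by
  have h1 : star (star x ⬝ᵥ (N *ᵥ x)) = -(star x ⬝ᵥ (N *ᵥ x)) := by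
    calc star (star x ⬝ᵥ (N *ᵥ x)) = star (N *ᵥ x) ⬝ᵥ x := by
          rw [Matrix.star_dotProduct, star_star]
      _ = (star x ᵥ* Nᴴ) ⬝ᵥ x := by rw [Matrix.star_mulVec]
      _ = star x ⬝ᵥ (Nᴴ *ᵥ x) := (Matrix.dotProduct_mulVec _ _ _).symm
      _ = -(star x ⬝ᵥ (N *ᵥ x)) := by rw [hN]; simp [Matrix.neg_mulVec]
  have h2 := congrArg Complex.re h1
  simp only [Complex.star_def, Complex.conj_re, Complex.neg_re] at h2
  linarith

lemma isUnit_det_of_re_pos {n : ℕ} {B : Matrix (Fin n) (Fin n) ℂ}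
    (h : ∀ x, x ≠ 0 → 0 < (star x ⬝ᵥ (B *ᵥ x)).re) : IsUnit B.det := by
  by_contra hd
  rw [isUnit_iff_ne_zero, not_not] at hd
  obtain ⟨v, hv, hv0⟩ := Matrix.exists_mulVec_eq_zero_iff.mpr hd
  have := h v hv
  rw [hv0] at this
  simp at this

lemma re_dot_smul_self {n : ℕ} (α : ℝ) (x : Fin n → ℂ) :
    (star x ⬝ᵥ ((α : ℂ) • x)).re = α * nsqV x := by
  rw [dotProduct_smul, smul_eq_mul, Complex.re_ofReal_mul, re_dot_self]

/-- The GADI iteration matrix `T_F(α,ω) = S⁻¹ H⁻¹ (α² I + M N − (1−ω) α A)`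
for complex matrices, with `A = M + N`, `H = α I + M`, `S = α I + N`. -/
noncomputable def gadiTF {n : ℕ} (M N : Matrix (Fin n) (Fin n) ℂ) (α ω : ℝ) :
    Matrix (Fin n) (Fin n) ℂ :=
  ((α : ℂ) • 1 + N)⁻¹ * ((α : ℂ) • 1 + M)⁻¹ *
    (((α : ℂ) ^ 2) • 1 + M * N - (((1 - ω) * α : ℝ) : ℂ) • (M + N))

lemma gadi_eig_bound {n : ℕ} {M N : Matrix (Fin n) (Fin n) ℂ} {α ω : ℝ} (hα : 0 < α)
    (hω0 : 0 ≤ ω) (hω2 : ω < 2) (hM : M.PosDef) (hN : N.PosSemidef ∨ Nᴴ = -N)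
    (hHdet : IsUnit ((α : ℂ) • 1 + M).det) (hSdet : IsUnit ((α : ℂ) • 1 + N).det)
    {lam : ℂ} (hlam : lam ∈ spectrum ℂ (gadiTF M N α ω)) : ‖lam‖ < 1 := by
  set H : Matrix (Fin n) (Fin n) ℂ := (α : ℂ) • 1 + M with hH
  set S : Matrix (Fin n) (Fin n) ℂ := (α : ℂ) • 1 + N with hS
  set P : Matrix (Fin n) (Fin n) ℂ := (α : ℂ) • 1 - M with hP
  set Q : Matrix (Fin n) (Fin n) ℂ := (α : ℂ) • 1 - N with hQ
  set K : Matrix (Fin n) (Fin n) ℂ :=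
    ((α : ℂ) ^ 2) • 1 + M * N - (((1 - ω) * α : ℝ) : ℂ) • (M + N) with hK
  have hgT : gadiTF M N α ω = S⁻¹ * H⁻¹ * K := rfl
  rw [spectrum.mem_iff] at hlam
  rw [Matrix.isUnit_iff_isUnit_det, isUnit_iff_ne_zero, not_not] at hlam
  obtain ⟨v, hv, hv0⟩ := Matrix.exists_mulVec_eq_zero_iff.mpr hlam
  have hTv : (gadiTF M N α ω) *ᵥ v = lam • v := by
    rw [Matrix.sub_mulVec] at hv0
    have h2 : (algebraMap ℂ (Matrix (Fin n) (Fin n) ℂ) lam) *ᵥ v = lam • v := by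
      rw [Algebra.algebraMap_eq_smul_one, Matrix.smul_mulVec, Matrix.one_mulVec]
    rw [h2] at hv0
    exact (sub_eq_zero.mp hv0).symm
  have hKv : K *ᵥ v = lam • ((H * S) *ᵥ v) := by
    have h1 : H * S * (S⁻¹ * H⁻¹ * K) = K := by
      have h2 : H * S * (S⁻¹ * H⁻¹ * K) = H * (S * S⁻¹) * H⁻¹ * K := by noncomm_ring
      rw [h2, Matrix.mul_nonsing_inv S hSdet, Matrix.mul_one,
        Matrix.mul_nonsing_inv H hHdet, Matrix.one_mul]
    calc K *ᵥ v = (H * S) *ᵥ ((S⁻¹ * H⁻¹ * K) *ᵥ v) := by rw [Matrix.mulVec_mulVec, h1]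
      _ = (H * S) *ᵥ (lam • v) := by rw [← hgT, hTv]
      _ = lam • ((H * S) *ᵥ v) := Matrix.mulVec_smul _ _ _
  have hKid : K = ((1 - ω/2 : ℝ) : ℂ) • (P * Q) + ((ω/2 : ℝ) : ℂ) • (H * S) := by
    rw [hK, hP, hQ, hH, hS]
    push_cast
    simp only [Matrix.mul_add, Matrix.add_mul, Matrix.mul_sub, Matrix.sub_mul,
      Matrix.smul_mul, Matrix.mul_smul, smul_smul, Matrix.mul_one, Matrix.one_mul]
    module
  have hmain0 : ((1 - ω/2 : ℝ) : ℂ) • ((P * Q) *ᵥ v) + ((ω/2 : ℝ) : ℂ) • ((H * S) *ᵥ v)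
      = lam • ((H * S) *ᵥ v) := by
    rw [← Matrix.smul_mulVec, ← Matrix.smul_mulVec, ← Matrix.add_mulVec, ← hKid, hKv]
  have hmain : ((1 - ω/2 : ℝ) : ℂ) • ((P * Q) *ᵥ v)
      = (lam - ((ω/2 : ℝ) : ℂ)) • ((H * S) *ᵥ v) := by
    rw [sub_smul]
    exact eq_sub_of_add_eq hmain0
  have hPH : P * H = H * P := by
    rw [hP, hH]
    simp only [Matrix.mul_add, Matrix.add_mul, Matrix.mul_sub, Matrix.sub_mul,
      Matrix.smul_mul, Matrix.mul_smul, smul_smul, Matrix.mul_one, Matrix.one_mul]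
    module
  have hcancelH : ∀ a b : Fin n → ℂ, H *ᵥ a = H *ᵥ b → a = b := by
    intro a b hab
    have := congrArg (fun t => H⁻¹ *ᵥ t) hab
    simpa [Matrix.mulVec_mulVec, Matrix.nonsing_inv_mul H hHdet] using this
  set w : Fin n → ℂ := S *ᵥ v with hw
  set z : Fin n → ℂ := Q *ᵥ v with hz
  set y : Fin n → ℂ := H⁻¹ *ᵥ z with hy
  have hwne : w ≠ 0 := by
    intro h0
    rw [hw] at h0
    apply hv
    have := congrArg (fun t => S⁻¹ *ᵥ t) h0
    simpa [Matrix.mulVec_mulVec, Matrix.nonsing_inv_mul S hSdet] using this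
  have hzy : H *ᵥ y = z := by
    rw [hy, Matrix.mulVec_mulVec, Matrix.mul_nonsing_inv H hHdet, Matrix.one_mulVec]
  have hPQv : (P * Q) *ᵥ v = H *ᵥ (P *ᵥ y) := by
    calc (P * Q) *ᵥ v = P *ᵥ z := by rw [hz, Matrix.mulVec_mulVec]
      _ = P *ᵥ (H *ᵥ y) := by rw [hzy]
      _ = (P * H) *ᵥ y := by rw [Matrix.mulVec_mulVec]
      _ = (H * P) *ᵥ y := by rw [hPH]
      _ = H *ᵥ (P *ᵥ y) := (Matrix.mulVec_mulVec y H P).symm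
  have hHSv : (H * S) *ᵥ v = H *ᵥ w := by rw [hw, Matrix.mulVec_mulVec]
  have hmain2 : ((1 - ω/2 : ℝ) : ℂ) • (P *ᵥ y) = (lam - ((ω/2 : ℝ) : ℂ)) • w := by
    apply hcancelH
    rw [Matrix.mulVec_smul, Matrix.mulVec_smul, ← hPQv, ← hHSv]
    exact hmain
  have hc2norm : ‖((ω/2 : ℝ) : ℂ)‖ = ω/2 := by
    rw [Complex.norm_real, Real.norm_eq_abs, abs_of_nonneg (by linarith)]
  rcases eq_or_ne z 0 with hz0 | hz0
  · have hy0 : y = 0 := by rw [hy, hz0, Matrix.mulVec_zero]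
    rw [hy0, Matrix.mulVec_zero, smul_zero] at hmain2
    have : lam - ((ω/2 : ℝ) : ℂ) = 0 := by
      rcases smul_eq_zero.mp hmain2.symm with h | h
      · exact h
      · exact absurd h hwne
    have hlam2 : lam = ((ω/2 : ℝ) : ℂ) := by
      rw [sub_eq_zero] at this; exact this
    rw [hlam2, hc2norm]
    linarith
  · have hyne : y ≠ 0 := by
      intro h0
      apply hz0
      rw [← hzy, h0, Matrix.mulVec_zero]
    have h1 : nsqV (P *ᵥ y) < nsqV z := by
      rw [← hzy]
      have hd := nsq_diff M α y
      rw [← hH, ← hP] at hd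
      have hre := posDef_re hM hyne
      nlinarith [mul_pos hα hre]
    have h2 : nsqV z ≤ nsqV w := by
      have hd := nsq_diff N α v
      rw [← hS, ← hQ, ← hw, ← hz] at hd
      have hre : 0 ≤ (star v ⬝ᵥ (N *ᵥ v)).re := by
        rcases hN with h | h
        · exact posSemidef_re h v
        · exact le_of_eq (skew_re h v).symm
      nlinarith [mul_nonneg hα.le hre]
    have h3 := congrArg nsqV hmain2
    rw [nsqV_smul, nsqV_smul] at h3
    have hc1 : Complex.normSq ((1 - ω/2 : ℝ) : ℂ) = (1 - ω/2)^2 := by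
      rw [Complex.normSq_ofReal]; ring
    rw [hc1] at h3
    have hwpos : 0 < nsqV w := nsqV_pos hwne
    have hq : nsqV (P *ᵥ y) < nsqV w := lt_of_lt_of_le h1 h2
    have hc1pos : (0:ℝ) < (1 - ω/2)^2 := by
      have : (0:ℝ) < 1 - ω/2 := by linarith
      positivity
    have h5 : Complex.normSq (lam - ((ω/2 : ℝ) : ℂ)) * nsqV w < (1 - ω/2)^2 * nsqV w := by
      nlinarith
    have h6 : Complex.normSq (lam - ((ω/2 : ℝ) : ℂ)) < (1 - ω/2)^2 :=
      lt_of_mul_lt_mul_right (by linarith) (nsqV_nonneg w)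
    have h7 : ‖lam - ((ω/2 : ℝ) : ℂ)‖ < 1 - ω/2 := by
      have hns : Complex.normSq (lam - ((ω/2 : ℝ) : ℂ)) = ‖lam - ((ω/2 : ℝ) : ℂ)‖^2 := by
        rw [Complex.sq_norm]
      rw [hns] at h6
      nlinarith [norm_nonneg (lam - ((ω/2 : ℝ) : ℂ)), hω2]
    calc ‖lam‖ = ‖(lam - ((ω/2 : ℝ) : ℂ)) + ((ω/2 : ℝ) : ℂ)‖ := by ring_nf
      _ ≤ ‖lam - ((ω/2 : ℝ) : ℂ)‖ + ‖((ω/2 : ℝ) : ℂ)‖ := norm_add_le _ _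
      _ < (1 - ω/2) + ω/2 := by rw [hc2norm]; linarith
      _ = 1 := by ring

lemma spectralRadius_lt_one_of_forall {n : ℕ} (T : Matrix (Fin n) (Fin n) ℂ)
    (h : ∀ lam ∈ spectrum ℂ T, ‖lam‖ < 1) : spectralRadius ℂ T < 1 := by
  have hfin := Matrix.finite_spectrum T
  set F := hfin.toFinset with hF
  have hFs : F.sup (fun lam => ‖lam‖₊) < 1 := by
    rw [Finset.sup_lt_iff (by norm_num : (⊥ : ℝ≥0) < 1)]
    intro lam hl
    have := h lam (hfin.mem_toFinset.mp hl)
    rw [← NNReal.coe_lt_coe]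
    simpa using this
  have hb : spectralRadius ℂ T ≤ ((F.sup (fun lam => ‖lam‖₊) : ℝ≥0) : ℝ≥0∞) := by
    refine iSup₂_le fun k hk => ?_
    exact ENNReal.coe_le_coe.mpr (Finset.le_sup (f := fun lam => ‖lam‖₊)
      (hfin.mem_toFinset.mpr hk))
  calc spectralRadius ℂ T ≤ _ := hb
    _ < 1 := by exact_mod_cast hFs

lemma pow_mulVec_tendsto_zero {n : ℕ} (T : Matrix (Fin n) (Fin n) ℂ)
    (hT : spectralRadius ℂ T < 1) (e : Fin n → ℂ) :
    Tendsto (fun k : ℕ => (T ^ k) *ᵥ e) atTop (nhds 0) := by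
  letI instN : NormedRing (Matrix (Fin n) (Fin n) ℂ) := Matrix.linftyOpNormedRing
  letI instA : NormedAlgebra ℂ (Matrix (Fin n) (Fin n) ℂ) := Matrix.linftyOpNormedAlgebra
  letI : CompleteSpace (Matrix (Fin n) (Fin n) ℂ) := FiniteDimensional.complete ℂ _
  have hls := spectrum.limsup_pow_nnnorm_pow_one_div_le_spectralRadius T
  have hlt : Filter.limsup (fun k : ℕ => (‖T ^ k‖₊ : ℝ≥0∞) ^ (1 / (k:ℝ))) atTop < 1 :=
    lt_of_le_of_lt hls hT
  obtain ⟨r, hr1, hr2⟩ := exists_between hlt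
  have hev := Filter.eventually_lt_of_limsup_lt hr1
  have hrtop : r ≠ ⊤ := (hr2.trans (by norm_num)).ne
  set r0 : ℝ≥0 := r.toNNReal with hr0def
  have hr0 : r = (r0 : ℝ≥0∞) := (ENNReal.coe_toNNReal hrtop).symm
  have hr01 : r0 < 1 := by
    rw [hr0, ← ENNReal.coe_one, ENNReal.coe_lt_coe] at hr2
    exact hr2
  have hev2 : ∀ᶠ k : ℕ in atTop, ‖T ^ k‖ ≤ (r0:ℝ)^k := by
    filter_upwards [hev, Filter.eventually_ge_atTop 1] with k hk hk1
    have hkne : (k:ℝ) ≠ 0 := by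
      have : 0 < k := hk1
      positivity
    have h1 : ((‖T ^ k‖₊ : ℝ≥0∞) ^ (1/(k:ℝ))) ^ (k:ℝ) ≤ r ^ (k:ℝ) :=
      ENNReal.rpow_le_rpow hk.le (by positivity)
    rw [← ENNReal.rpow_mul, one_div, inv_mul_cancel₀ hkne, ENNReal.rpow_one] at h1
    rw [hr0, ← ENNReal.coe_rpow_of_nonneg _ (by positivity)] at h1
    have h2 : ‖T ^ k‖₊ ≤ r0 ^ (k:ℝ) := ENNReal.coe_le_coe.mp h1
    calc ‖T ^ k‖ = ((‖T ^ k‖₊ : ℝ≥0) : ℝ) := rfl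
      _ ≤ ((r0 ^ (k:ℝ) : ℝ≥0) : ℝ) := h2
      _ = (r0:ℝ) ^ k := by rw [NNReal.coe_rpow, Real.rpow_natCast]
  rw [tendsto_zero_iff_norm_tendsto_zero]
  apply squeeze_zero' (Filter.Eventually.of_forall fun k => norm_nonneg _)
    (g := fun k => (r0:ℝ)^k * ‖e‖)
  · filter_upwards [hev2] with k hk
    calc ‖(T ^ k) *ᵥ e‖ ≤ ‖T ^ k‖ * ‖e‖ := Matrix.linfty_opNorm_mulVec _ _
      _ ≤ (r0:ℝ)^k * ‖e‖ := by
        apply mul_le_mul_of_nonneg_right hk (norm_nonneg _)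
  · have := (tendsto_pow_atTop_nhds_zero_of_lt_one r0.coe_nonneg
      (by exact_mod_cast hr01)).mul_const ‖e‖
    simpa using this

/-- **Convergence of GADI (Lemma 2.2).** If `M` is Hermitian positive definite and `N` is
Hermitian positive semidefinite or skew-Hermitian, then for any `α > 0` and `ω ∈ [0,2)`,
the matrices `A = M + N`, `H = α I + M`, `S = α I + N` are invertible, the GADI iteration
matrix has spectral radius `< 1`, and the GADI iterates converge to the unique solution
of `A x = b` for every `b` and every starting vector. -/
theorem gadi_convergence {n : ℕ} (M N A H S : Matrix (Fin n) (Fin n) ℂ)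
    (hA : A = M + N) (α ω : ℝ) (hα : 0 < α) (hω : ω ∈ Set.Ico (0 : ℝ) 2)
    (hH : H = (α : ℂ) • 1 + M) (hS : S = (α : ℂ) • 1 + N)
    (hM : M.PosDef) (hN : N.PosSemidef ∨ Nᴴ = -N) :
    IsUnit A.det ∧ IsUnit H.det ∧ IsUnit S.det ∧
      spectralRadius ℂ (gadiTF M N α ω) < 1 ∧
      ∀ b : Fin n → ℂ,
        (∃! x : Fin n → ℂ, A *ᵥ x = b) ∧
        A *ᵥ (A⁻¹ *ᵥ b) = b ∧
        ∀ x₀ : Fin n → ℂ,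
          Tendsto
            (fun k : ℕ =>
              (fun y : Fin n → ℂ =>
                  gadiTF M N α ω *ᵥ y +
                    (((2 - ω) * α : ℝ) : ℂ) • ((S⁻¹ * H⁻¹) *ᵥ b))^[k] x₀)
            atTop (nhds (A⁻¹ *ᵥ b)) := by
  subst hA hH hS
  obtain ⟨hω0, hω2⟩ := hω
  have hNre : ∀ x : Fin n → ℂ, 0 ≤ (star x ⬝ᵥ (N *ᵥ x)).re := fun x => by
    rcases hN with h | h
    · exact posSemidef_re h x
    · exact le_of_eq (skew_re h x).symm
  have hHq : ∀ x : Fin n → ℂ, x ≠ 0 → 0 < (star x ⬝ᵥ (((α:ℂ) • 1 + M) *ᵥ x)).re := by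
    intro x hx
    have hexp : ((α:ℂ) • 1 + M) *ᵥ x = (α:ℂ) • x + M *ᵥ x := by
      simp [Matrix.add_mulVec, Matrix.smul_mulVec]
    rw [hexp, dotProduct_add, Complex.add_re, re_dot_smul_self]
    have h1 := posDef_re hM hx
    have h2 := mul_pos hα (nsqV_pos hx)
    linarith
  have hSq : ∀ x : Fin n → ℂ, x ≠ 0 → 0 < (star x ⬝ᵥ (((α:ℂ) • 1 + N) *ᵥ x)).re := by
    intro x hx
    have hexp : ((α:ℂ) • 1 + N) *ᵥ x = (α:ℂ) • x + N *ᵥ x := by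
      simp [Matrix.add_mulVec, Matrix.smul_mulVec]
    rw [hexp, dotProduct_add, Complex.add_re, re_dot_smul_self]
    have h1 := hNre x
    have h2 := mul_pos hα (nsqV_pos hx)
    linarith
  have hAq : ∀ x : Fin n → ℂ, x ≠ 0 → 0 < (star x ⬝ᵥ ((M + N) *ᵥ x)).re := by
    intro x hx
    rw [Matrix.add_mulVec, dotProduct_add, Complex.add_re]
    have h1 := posDef_re hM hx
    have h2 := hNre x
    linarith
  have hAdet := isUnit_det_of_re_pos hAq
  have hHdet := isUnit_det_of_re_pos hHq
  have hSdet := isUnit_det_of_re_pos hSq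
  have hρ : spectralRadius ℂ (gadiTF M N α ω) < 1 :=
    spectralRadius_lt_one_of_forall _
      (fun lam hl => gadi_eig_bound hα hω0 hω2 hM hN hHdet hSdet hl)
  refine ⟨hAdet, hHdet, hSdet, hρ, ?_⟩
  intro b
  set Hm : Matrix (Fin n) (Fin n) ℂ := (α:ℂ) • 1 + M with hHm
  set Sm : Matrix (Fin n) (Fin n) ℂ := (α:ℂ) • 1 + N with hSm
  set xstar : Fin n → ℂ := (M + N)⁻¹ *ᵥ b with hxstar
  have hxsol : (M + N) *ᵥ xstar = b := by
    rw [hxstar, Matrix.mulVec_mulVec, Matrix.mul_nonsing_inv _ hAdet, Matrix.one_mulVec]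
  have huniq : ∀ x : Fin n → ℂ, (M + N) *ᵥ x = b → x = xstar := by
    intro x hx
    have := congrArg (fun t => (M + N)⁻¹ *ᵥ t) hx
    simpa [Matrix.mulVec_mulVec, Matrix.nonsing_inv_mul _ hAdet, hxstar] using this
  refine ⟨⟨xstar, hxsol, huniq⟩, hxsol, ?_⟩
  intro x₀
  set T : Matrix (Fin n) (Fin n) ℂ := gadiTF M N α ω with hT
  set c0 : ℂ := (((2 - ω) * α : ℝ) : ℂ) with hc0
  set d : Fin n → ℂ := c0 • ((Sm⁻¹ * Hm⁻¹) *ᵥ b) with hd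
  have hKid2 : ((α : ℂ) ^ 2) • (1 : Matrix (Fin n) (Fin n) ℂ) + M * N
      - (((1 - ω) * α : ℝ) : ℂ) • (M + N) = Hm * Sm - c0 • (M + N) := by
    rw [hHm, hSm, hc0]
    push_cast
    simp only [Matrix.mul_add, Matrix.add_mul, Matrix.mul_sub, Matrix.sub_mul,
      Matrix.smul_mul, Matrix.mul_smul, smul_smul, Matrix.mul_one, Matrix.one_mul]
    module
  have hone : Sm⁻¹ * Hm⁻¹ * (Hm * Sm) = 1 := by
    have h2 : Sm⁻¹ * Hm⁻¹ * (Hm * Sm) = Sm⁻¹ * (Hm⁻¹ * Hm) * Sm := by noncomm_ring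
    rw [h2, Matrix.nonsing_inv_mul _ hHdet, Matrix.mul_one, Matrix.nonsing_inv_mul _ hSdet]
  have hT1 : T = 1 - c0 • (Sm⁻¹ * Hm⁻¹ * (M + N)) := by
    calc T = Sm⁻¹ * Hm⁻¹ * (((α : ℂ) ^ 2) • 1 + M * N - (((1 - ω) * α : ℝ) : ℂ) • (M + N)) :=
        rfl
      _ = Sm⁻¹ * Hm⁻¹ * (Hm * Sm - c0 • (M + N)) := by rw [hKid2]
      _ = Sm⁻¹ * Hm⁻¹ * (Hm * Sm) - c0 • (Sm⁻¹ * Hm⁻¹ * (M + N)) := by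
          rw [Matrix.mul_sub, Matrix.mul_smul]
      _ = 1 - c0 • (Sm⁻¹ * Hm⁻¹ * (M + N)) := by rw [hone]
  have hfix : T *ᵥ xstar + d = xstar := by
    rw [hT1, Matrix.sub_mulVec, Matrix.one_mulVec, Matrix.smul_mulVec]
    have hx2 : (Sm⁻¹ * Hm⁻¹ * (M + N)) *ᵥ xstar = (Sm⁻¹ * Hm⁻¹) *ᵥ b := by
      rw [← Matrix.mulVec_mulVec, hxsol]
    rw [hx2, hd]
    abel
  have hiter : ∀ k : ℕ,
      (fun y : Fin n → ℂ => T *ᵥ y + d)^[k] x₀ = (T ^ k) *ᵥ (x₀ - xstar) + xstar := by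
    intro k
    induction k with
    | zero => simp
    | succ k ih =>
      rw [Function.iterate_succ_apply', ih]
      show T *ᵥ ((T ^ k) *ᵥ (x₀ - xstar) + xstar) + d = _
      calc T *ᵥ ((T ^ k) *ᵥ (x₀ - xstar) + xstar) + d
          = ((T * T ^ k) *ᵥ (x₀ - xstar)) + (T *ᵥ xstar + d) := by
            rw [Matrix.mulVec_add, Matrix.mulVec_mulVec, add_assoc]
        _ = (T ^ (k + 1)) *ᵥ (x₀ - xstar) + xstar := by rw [hfix, ← pow_succ']
  have hconv := pow_mulVec_tendsto_zero T hρ (x₀ - xstar)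
  have hconv2 : Tendsto (fun k : ℕ => (T ^ k) *ᵥ (x₀ - xstar) + xstar) atTop
      (nhds (0 + xstar)) := hconv.add_const xstar
  rw [zero_add] at hconv2
  have hfeq : (fun k : ℕ => (fun y : Fin n → ℂ => T *ᵥ y + d)^[k] x₀)
      = fun k : ℕ => (T ^ k) *ᵥ (x₀ - xstar) + xstar := funext hiter
  show Tendsto (fun k : ℕ => (fun y : Fin n → ℂ => T *ᵥ y + d)^[k] x₀) atTop (nhds xstar)
  rw [hfeq]
  exact hconv2
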